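/- If a real Banach space X is almost isometric to a separable Gurariy space G, then X is isometrically isomorphic to G, i.e., there exists a surjective linear isometry from X onto G. -/

import Mathlib

open TopologicalSpace

/-- `T` is an `ε`-isometry: `(1+ε)⁻¹‖x‖ ≤ ‖T x‖ ≤ (1+ε)‖x‖` for all `x`. -/
def IsEpsIsometry {X Y : Type*} [NormedAddCommGroup X] [NormedAddCommGroup Y]
    (ε : ℝ) (T : X → Y) : Prop :=
  ∀ x : X, (1 + ε)⁻¹ * ‖x‖ ≤ ‖T x‖ ∧ ‖T x‖ ≤ (1 + ε) * ‖x‖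

/-- `X` and `Y` are almost isometric: for every `ε > 0` there is a surjective linear
`ε`-isometry from `X` onto `Y`. -/
def AlmostIsometric (X Y : Type*) [NormedAddCommGroup X] [NormedSpace ℝ X]
    [NormedAddCommGroup Y] [NormedSpace ℝ Y] : Prop :=
  ∀ ε : ℝ, 0 < ε → ∃ T : X →ₗ[ℝ] Y, Function.Surjective T ∧ IsEpsIsometry ε ⇑T

/-- `X` is a Gurariy space: for every `ε > 0`, every pair of finite-dimensional normed
spaces `E ⊆ F` and every linear isometric embedding `T : E → X`, there is a linear
extension `S : F → X` of `T` which is an `ε`-isometry. -/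
def IsGurariy (X : Type*) [NormedAddCommGroup X] [NormedSpace ℝ X] : Prop :=
  ∀ ε : ℝ, 0 < ε →
    ∀ (F : Type) [NormedAddCommGroup F] [NormedSpace ℝ F] [FiniteDimensional ℝ F]
      (E : Subspace ℝ F) (T : E →ₗ[ℝ] X),
      (∀ e : E, ‖T e‖ = ‖e‖) →
      ∃ S : F →ₗ[ℝ] X, (∀ e : E, S e = T e) ∧ IsEpsIsometry ε ⇑S

/-- `Y` is an almost isometric ideal (a.i.-ideal) in `X`. -/
def IsAIIdeal {X : Type*} [NormedAddCommGroup X] [NormedSpace ℝ X]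
    (Y : Subspace ℝ X) : Prop :=
  IsClosed (Y : Set X) ∧
  ∀ ε : ℝ, 0 < ε → ∀ E : Subspace ℝ X, FiniteDimensional ℝ E →
    ∃ T : E →ₗ[ℝ] Y, (∀ e : E, (e : X) ∈ Y → ((T e : Y) : X) = (e : X)) ∧
      IsEpsIsometry ε ⇑T


namespace AG

theorem eps_mono {X G : Type*} [NormedAddCommGroup X] [NormedAddCommGroup G]
    {ε ε' : ℝ} (hε : 0 ≤ ε) (hε' : ε ≤ ε') {T : X → G}
    (h : IsEpsIsometry ε T) : IsEpsIsometry ε' T := fun x => by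
  obtain ⟨h1, h2⟩ := h x
  have h3 : (0:ℝ) < 1 + ε := by linarith
  have h4 : (0:ℝ) < 1 + ε' := by linarith
  constructor
  · refine le_trans (mul_le_mul_of_nonneg_right ?_ (norm_nonneg x)) h1
    exact inv_anti₀ h3 (by linarith)
  · exact h2.trans (mul_le_mul_of_nonneg_right (by linarith) (norm_nonneg x))

theorem eps_bounds_symm {ε a c : ℝ} (hε : 0 ≤ ε) (ha : 0 ≤ a)
    (h1 : (1+ε)⁻¹ * a ≤ c) (h2 : c ≤ (1+ε)*a) :
    (1+ε)⁻¹ * c ≤ a ∧ a ≤ (1+ε)*c := by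
  have h3 : (0:ℝ) < 1+ε := by linarith
  have h4 : (1+ε) * (1+ε)⁻¹ = 1 := mul_inv_cancel₀ (ne_of_gt h3)
  have h5 : (0:ℝ) ≤ (1+ε)⁻¹ := inv_nonneg.mpr h3.le
  constructor
  · nlinarith [mul_le_mul_of_nonneg_left h2 h5]
  · nlinarith [mul_le_mul_of_nonneg_left h1 h3.le]

theorem eps_injective {X G : Type*} [NormedAddCommGroup X] [NormedAddCommGroup G]
    [Module ℝ X] [Module ℝ G]
    {ε : ℝ} (hε : 0 ≤ ε) (T : X →ₗ[ℝ] G) (h : IsEpsIsometry ε ⇑T) :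
    Function.Injective ⇑T := by
  intro a b hab
  have h1 := (h (a - b)).1
  rw [map_sub, hab, sub_self, norm_zero] at h1
  have h3 : (0:ℝ) < 1+ε := by linarith
  have h6 : ‖a - b‖ ≤ 0 := by
    by_contra hc
    push_neg at hc
    nlinarith [inv_pos.mpr h3]
  have h7 : a - b = 0 := by
    have := le_antisymm h6 (norm_nonneg _); rwa [norm_eq_zero] at this
  exact sub_eq_zero.mp h7

theorem eps_equiv_symm {X G : Type*} [NormedAddCommGroup X] [NormedAddCommGroup G]
    [Module ℝ X] [Module ℝ G]
    {ε : ℝ} (hε : 0 ≤ ε) (Te : X ≃ₗ[ℝ] G) (h : IsEpsIsometry ε ⇑Te) :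
    IsEpsIsometry ε ⇑Te.symm := fun y => by
  have h1 := h (Te.symm y)
  rw [Te.apply_symm_apply] at h1
  exact eps_bounds_symm hε (norm_nonneg _) h1.1 h1.2

theorem eps_comp {X G Z : Type*} [NormedAddCommGroup X] [NormedAddCommGroup G]
    [NormedAddCommGroup Z]
    {ε₁ ε₂ ε₃ : ℝ} (h1 : 0 ≤ ε₁) (h2 : 0 ≤ ε₂) (h3 : (1+ε₁)*(1+ε₂) ≤ 1+ε₃)
    {T : X → G} {S : G → Z} (hT : IsEpsIsometry ε₁ T) (hS : IsEpsIsometry ε₂ S) :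
    IsEpsIsometry ε₃ (fun x => S (T x)) := fun x => by
  obtain ⟨a1, a2⟩ := hT x
  obtain ⟨b1, b2⟩ := hS (T x)
  have p1 : (0:ℝ) < 1+ε₁ := by linarith
  have p2 : (0:ℝ) < 1+ε₂ := by linarith
  have p3 : (0:ℝ) < 1+ε₃ := by nlinarith
  constructor
  · have k1 : (1+ε₃)⁻¹ ≤ ((1+ε₁)*(1+ε₂))⁻¹ := by
      apply inv_anti₀ (by positivity) h3
    have k2 : ((1+ε₁)*(1+ε₂))⁻¹ = (1+ε₂)⁻¹ * (1+ε₁)⁻¹ := by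
      rw [mul_inv]; ring
    calc (1+ε₃)⁻¹ * ‖x‖ ≤ (1+ε₂)⁻¹ * ((1+ε₁)⁻¹ * ‖x‖) := by
          rw [← mul_assoc, ← k2]
          exact mul_le_mul_of_nonneg_right k1 (norm_nonneg x)
      _ ≤ (1+ε₂)⁻¹ * ‖T x‖ := by
          exact mul_le_mul_of_nonneg_left a1 (by positivity)
      _ ≤ ‖S (T x)‖ := b1
  · calc ‖S (T x)‖ ≤ (1+ε₂) * ‖T x‖ := b2
      _ ≤ (1+ε₂) * ((1+ε₁) * ‖x‖) := mul_le_mul_of_nonneg_left a2 p2.le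
      _ ≤ (1+ε₃) * ‖x‖ := by nlinarith [norm_nonneg x]

end AG
-- Layer 2: the amalgamation norm
namespace AG

section Nsec

variable {G : Type*} [NormedAddCommGroup G] [NormedSpace ℝ G]
variable {F : Type*} [NormedAddCommGroup F] [NormedSpace ℝ F]
variable {E : Subspace ℝ F}

/-- auxiliary function for the amalgamation norm -/
noncomputable def Phi (δ : ℝ) (f : E →ₗ[ℝ] G) (p : F × E) (e : E) : ℝ :=
  ‖p.1 - (e : F)‖ + ‖f p.2 + f e‖ + δ * ‖(e : F)‖

/-- the amalgamation norm on `F × E` -/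
noncomputable def Nn (δ : ℝ) (f : E →ₗ[ℝ] G) (p : F × E) : ℝ :=
  ⨅ e : E, Phi δ f p e

variable {δ : ℝ} {f : E →ₗ[ℝ] G}

theorem Phi_nonneg (hδ : 0 ≤ δ) (p : F × E) (e : E) : 0 ≤ Phi δ f p e := by
  unfold Phi; positivity

theorem Phi_bdd (hδ : 0 ≤ δ) (p : F × E) : BddBelow (Set.range (Phi δ f p)) :=
  ⟨0, fun x ⟨e, he⟩ => he ▸ Phi_nonneg hδ p e⟩

theorem Nn_le (hδ : 0 ≤ δ) (p : F × E) (e : E) : Nn δ f p ≤ Phi δ f p e :=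
  ciInf_le (Phi_bdd hδ p) e

theorem le_Nn {c : ℝ} (p : F × E) (h : ∀ e : E, c ≤ Phi δ f p e) : c ≤ Nn δ f p :=
  le_ciInf h

theorem Nn_nonneg (hδ : 0 ≤ δ) (p : F × E) : 0 ≤ Nn δ f p :=
  le_Nn p (fun e => Phi_nonneg hδ p e)

theorem inv_one_add_delta (hδ0 : 0 < δ) (hδ1 : δ ≤ 1) : 1 - δ ≤ (1+δ)⁻¹ := by
  rw [show (1+δ)⁻¹ = 1/(1+δ) by rw [one_div], le_div_iff₀ (by linarith)]
  nlinarith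

theorem norm_sub_trick (a b : G) : ‖a‖ ≤ ‖a + b‖ + ‖b‖ := by
  have h : a = (a + b) + (-b) := by abel
  calc ‖a‖ = ‖(a + b) + (-b)‖ := by rw [← h]
    _ ≤ ‖a + b‖ + ‖b‖ := by simpa using norm_add_le (a+b) (-b)

section withf
variable (hδ0 : 0 < δ) (hδ1 : δ ≤ 1) (hf : IsEpsIsometry δ ⇑f)
include hδ0 hδ1 hf

theorem Nn_fst (v : F) : Nn δ f (v, 0) = ‖v‖ := by
  apply le_antisymm
  · have := Nn_le (f := f) hδ0.le (v, (0:E)) 0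
    simpa [Phi] using this
  · apply le_Nn
    intro e
    unfold Phi
    simp only [map_zero, zero_add]
    have hC : (0:ℝ) ≤ ‖(e:F)‖ := norm_nonneg _
    have hne : ‖e‖ = ‖(e:F)‖ := rfl
    have h1 := (hf e).1
    rw [hne] at h1
    have h3 : (1:ℝ) ≤ (1+δ)⁻¹ + δ := by
      have := inv_one_add_delta hδ0 hδ1; linarith
    have h5 : ‖(e:F)‖ ≤ ‖f e‖ + δ * ‖(e:F)‖ := by
      nlinarith [mul_le_mul_of_nonneg_right h3 hC]
    have h4 : ‖v‖ ≤ ‖v - (e:F)‖ + ‖(e:F)‖ := by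
      have h : v = (v - (e:F)) + (e:F) := by abel
      calc ‖v‖ = ‖(v - (e:F)) + (e:F)‖ := by rw [← h]
        _ ≤ _ := norm_add_le _ _
    linarith

theorem Nn_snd (a : E) : Nn δ f (0, a) = ‖f a‖ := by
  apply le_antisymm
  · have := Nn_le (f := f) hδ0.le ((0:F), a) 0
    simpa [Phi] using this
  · apply le_Nn
    intro e
    unfold Phi
    have h1 : ‖f a‖ ≤ ‖f a + f e‖ + ‖f e‖ := norm_sub_trick _ _
    have hne : ‖e‖ = ‖(e:F)‖ := rfl
    have h2 := (hf e).2
    rw [hne] at h2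
    have h6 : ‖(e:F)‖ ≤ ‖(0:F) - (e:F)‖ := by simp
    nlinarith [norm_nonneg (e:F)]

theorem Nn_lower (p : F × E) : δ/5 * (‖p.1‖ + ‖(p.2 : F)‖) ≤ Nn δ f p := by
  apply le_Nn
  intro e
  unfold Phi
  set A := ‖p.1 - (e:F)‖ with hA'
  set B := ‖f p.2 + f e‖ with hB'
  set C := ‖(e:F)‖ with hC'
  have hA : 0 ≤ A := norm_nonneg _
  have hB : 0 ≤ B := norm_nonneg _
  have hC : 0 ≤ C := norm_nonneg _
  have h1 : ‖p.1‖ ≤ A + C := by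
    have h : p.1 = (p.1 - (e:F)) + (e:F) := by abel
    calc ‖p.1‖ = ‖(p.1 - (e:F)) + (e:F)‖ := by rw [← h]
      _ ≤ A + C := norm_add_le _ _
  have h2 : ‖f p.2‖ ≤ B + (1+δ) * C := by
    have t := norm_sub_trick (f p.2) (f e)
    have h4 := (hf e).2
    have hne : ‖e‖ = ‖(e:F)‖ := rfl
    rw [hne] at h4
    linarith
  have h3 : ‖(p.2 : F)‖ ≤ (1+δ) * ‖f p.2‖ := by
    have hb := (eps_bounds_symm hδ0.le (norm_nonneg p.2) (hf p.2).1 (hf p.2).2).2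
    have hne : ‖p.2‖ = ‖(p.2 : F)‖ := rfl
    rw [hne] at hb; exact hb
  have hfn : 0 ≤ ‖f p.2‖ := norm_nonneg _
  have k1 : ‖(p.2:F)‖ ≤ 2*B + 4*C := by
    nlinarith [mul_le_mul_of_nonneg_left h2 (show (0:ℝ) ≤ 1+δ by linarith),
      mul_le_mul_of_nonneg_right hδ1 hB, mul_le_mul_of_nonneg_right hδ1 hC,
      mul_le_mul_of_nonneg_left (mul_le_mul_of_nonneg_right hδ1 hC) hδ0.le]
  have k2 : ‖p.1‖ + ‖(p.2:F)‖ ≤ A + 2*B + 5*C := by linarith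
  have k3 : δ/5 * (‖p.1‖ + ‖(p.2:F)‖) ≤ δ/5 * (A + 2*B + 5*C) :=
    mul_le_mul_of_nonneg_left k2 (by positivity)
  have k4 : δ * A ≤ 1 * A := mul_le_mul_of_nonneg_right (by linarith) hA
  have k5 : δ * B ≤ 1 * B := mul_le_mul_of_nonneg_right (by linarith) hB
  nlinarith

omit hδ1 hf in
theorem Nn_add (p q : F × E) : Nn δ f (p + q) ≤ Nn δ f p + Nn δ f q := by
  apply le_of_forall_pos_le_add
  intro η hη
  haveI : Nonempty E := ⟨0⟩
  have hlt1 : (⨅ e : E, Phi δ f p e) < Nn δ f p + η/2 := by unfold Nn; linarith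
  have hlt2 : (⨅ e : E, Phi δ f q e) < Nn δ f q + η/2 := by unfold Nn; linarith
  obtain ⟨e1, he1⟩ := exists_lt_of_ciInf_lt hlt1
  obtain ⟨e2, he2⟩ := exists_lt_of_ciInf_lt hlt2
  have key : Phi δ f (p + q) (e1 + e2) ≤ Phi δ f p e1 + Phi δ f q e2 := by
    unfold Phi
    have t1 : ‖(p+q).1 - ((e1+e2 : E) : F)‖ ≤ ‖p.1 - (e1:F)‖ + ‖q.1 - (e2:F)‖ := by
      have h : (p+q).1 - ((e1+e2 : E) : F) = (p.1 - (e1:F)) + (q.1 - (e2:F)) := by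
        push_cast [Prod.fst_add]; abel
      rw [h]; exact norm_add_le _ _
    have t2 : ‖f (p+q).2 + f (e1+e2)‖ ≤ ‖f p.2 + f e1‖ + ‖f q.2 + f e2‖ := by
      have h : f (p+q).2 + f (e1+e2) = (f p.2 + f e1) + (f q.2 + f e2) := by
        simp only [Prod.snd_add, map_add]; abel
      rw [h]; exact norm_add_le _ _
    have t3 : δ * ‖((e1+e2 : E) : F)‖ ≤ δ * ‖(e1:F)‖ + δ * ‖(e2:F)‖ := by
      have h : ‖((e1+e2 : E) : F)‖ ≤ ‖(e1:F)‖ + ‖(e2:F)‖ := by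
        push_cast; exact norm_add_le _ _
      nlinarith [mul_le_mul_of_nonneg_left h hδ0.le]
    linarith
  have := (Nn_le (f := f) hδ0.le (p + q) (e1 + e2)).trans key
  linarith

omit hδ1 hf in
theorem Nn_neg (p : F × E) : Nn δ f (-p) = Nn δ f p := by
  have key : ∀ q : F × E, Nn δ f (-q) ≤ Nn δ f q := by
    intro q
    apply le_Nn
    intro e
    have heq : Phi δ f (-q) (-e) = Phi δ f q e := by
      unfold Phi
      have t1 : (-q).1 - ((-e : E) : F) = -(q.1 - (e:F)) := by
        push_cast [Prod.fst_neg]; abel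
      have t2 : f (-q).2 + f (-e) = -(f q.2 + f e) := by
        simp only [Prod.snd_neg, map_neg]; abel
      have t3 : ((-e : E) : F) = -(e:F) := by push_cast; ring
      rw [t1, t2, t3, norm_neg, norm_neg, norm_neg]
    calc Nn δ f (-q) ≤ Phi δ f (-q) (-e) := Nn_le hδ0.le _ _
      _ = Phi δ f q e := heq
  apply le_antisymm (key p)
  have := key (-p); rwa [neg_neg] at this

omit hδ1 hf in
theorem Nn_zero : Nn δ f 0 ≤ 0 := by
  have := Nn_le (f := f) hδ0.le 0 0
  simpa [Phi] using this

omit hδ1 hf in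
theorem Nn_smul (c : ℝ) (p : F × E) : Nn δ f (c • p) ≤ |c| * Nn δ f p := by
  rcases eq_or_ne c 0 with hc | hc
  · subst hc
    simpa using Nn_zero hδ0 (f := f)
  · have hc' : 0 < |c| := abs_pos.mpr hc
    rw [mul_comm, ← div_le_iff₀ hc']
    apply le_Nn
    intro e
    rw [div_le_iff₀ hc']
    calc Nn δ f (c • p) ≤ Phi δ f (c • p) (c • e) := Nn_le hδ0.le _ _
      _ = Phi δ f p e * |c| := by
          unfold Phi
          have t1 : ‖(c • p).1 - ((c • e : E) : F)‖ = |c| * ‖p.1 - (e:F)‖ := by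
            push_cast
            rw [Prod.smul_fst, ← smul_sub, norm_smul, Real.norm_eq_abs]
          have t2 : ‖f (c • p).2 + f (c • e)‖ = |c| * ‖f p.2 + f e‖ := by
            simp only [Prod.smul_snd, map_smul]
            rw [← smul_add, norm_smul, Real.norm_eq_abs]
          have t3 : δ * ‖((c • e : E) : F)‖ = |c| * (δ * ‖(e:F)‖) := by
            push_cast
            rw [norm_smul, Real.norm_eq_abs]; ring
          rw [t1, t2, t3]; ring

omit hδ1 hf in
theorem Nn_diag (a : E) : Nn δ f ((a : F), -a) ≤ δ * ‖(a:F)‖ := by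
  have := Nn_le (f := f) hδ0.le ((a : F), -a) a
  unfold Phi at this
  simpa using this

end withf
end Nsec

end AG
-- Layer 3: universe-polymorphic Gurariy property and Lemma B
namespace AG

/-- type synonym used to carry custom norms -/
def Copy (M : Type u) : Type u := M

theorem isGurariy_univ {G : Type*} [NormedAddCommGroup G] [NormedSpace ℝ G]
    (hG : IsGurariy G) {ε : ℝ} (hε : 0 < ε)
    (F : Type v) [NormedAddCommGroup F] [NormedSpace ℝ F] [FiniteDimensional ℝ F]
    (E : Subspace ℝ F) (T : E →ₗ[ℝ] G) (hT : ∀ e : E, ‖T e‖ = ‖e‖) :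
    ∃ S : F →ₗ[ℝ] G, (∀ e : E, S e = T e) ∧ IsEpsIsometry ε ⇑S := by
  let b : Module.Basis (Fin (Module.finrank ℝ F)) ℝ F := Module.finBasis ℝ F
  let φ0 : (Fin (Module.finrank ℝ F) → ℝ) ≃ₗ[ℝ] F := b.equivFun.symm
  letI : AddCommGroup (Copy (Fin (Module.finrank ℝ F) → ℝ)) :=
    inferInstanceAs (AddCommGroup (Fin (Module.finrank ℝ F) → ℝ))
  letI : Module ℝ (Copy (Fin (Module.finrank ℝ F) → ℝ)) :=
    inferInstanceAs (Module ℝ (Fin (Module.finrank ℝ F) → ℝ))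
  let φ : Copy (Fin (Module.finrank ℝ F) → ℝ) ≃ₗ[ℝ] F := φ0
  letI : NormedAddCommGroup (Copy (Fin (Module.finrank ℝ F) → ℝ)) :=
    NormedAddCommGroup.induced _ F φ.toLinearMap φ.injective
  letI : NormedSpace ℝ (Copy (Fin (Module.finrank ℝ F) → ℝ)) :=
    NormedSpace.induced ℝ _ F φ.toLinearMap
  letI : FiniteDimensional ℝ (Copy (Fin (Module.finrank ℝ F) → ℝ)) :=
    Module.Finite.equiv φ.symm
  let E0 : Subspace ℝ (Copy (Fin (Module.finrank ℝ F) → ℝ)) := E.comap φ.toLinearMap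
  let r : ↥E0 →ₗ[ℝ] ↥E := φ.toLinearMap.restrict (p := E0) (q := E) (fun _ hx => hx)
  let T0 : ↥E0 →ₗ[ℝ] G := T ∘ₗ r
  have hT0 : ∀ e0 : E0, ‖T0 e0‖ = ‖e0‖ := fun e0 => by
    show ‖T (r e0)‖ = _
    rw [hT (r e0)]
    rfl
  obtain ⟨S0, hS0e, hS0iso⟩ := hG ε hε _ E0 T0 hT0
  refine ⟨S0 ∘ₗ (φ.symm.toLinearMap), fun e => ?_, fun x => ?_⟩
  · show S0 (φ.symm (e : F)) = T e
    have he0 : φ.symm (e : F) ∈ E0 := by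
      show φ (φ.symm (e : F)) ∈ E
      rw [φ.apply_symm_apply]; exact e.2
    have := hS0e ⟨φ.symm (e : F), he0⟩
    rw [this]
    show T (r ⟨φ.symm (e : F), he0⟩) = T e
    congr 1
    apply Subtype.ext
    show φ (φ.symm (e : F)) = (e : F)
    rw [φ.apply_symm_apply]
  · have := hS0iso (φ.symm x)
    have hn : ‖φ.symm x‖ = ‖x‖ := by
      show ‖φ (φ.symm x)‖ = ‖x‖
      rw [φ.apply_symm_apply]
    rw [hn] at this
    exact this

theorem lemB {G : Type*} [NormedAddCommGroup G] [NormedSpace ℝ G]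
    (hG : IsGurariy G) {δ ε : ℝ} (hδ0 : 0 < δ) (hδ1 : δ ≤ 1) (hε : 0 < ε)
    (F : Type v) [NormedAddCommGroup F] [NormedSpace ℝ F] [FiniteDimensional ℝ F]
    (E : Subspace ℝ F) (f : E →ₗ[ℝ] G) (hf : IsEpsIsometry δ ⇑f) :
    ∃ g : F →ₗ[ℝ] G, IsEpsIsometry ε ⇑g ∧ ∀ e : E, ‖g e - f e‖ ≤ 2 * δ * ‖(e:F)‖ := by
  set ε₀ := min ε 1 with hε₀
  have hε₀0 : 0 < ε₀ := lt_min hε one_pos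
  have hε₀1 : ε₀ ≤ 1 := min_le_right _ _
  have hε₀ε : ε₀ ≤ ε := min_le_left _ _
  -- the amalgam space
  letI : AddCommGroup (Copy (F × E)) := inferInstanceAs (AddCommGroup (F × E))
  letI : Module ℝ (Copy (F × E)) := (inferInstance : Module ℝ (F × E))
  let ceq : Copy (F × E) ≃ₗ[ℝ] (F × E) :=
    { toFun := fun w => w, invFun := fun p => p,
      map_add' := fun _ _ => rfl, map_smul' := fun _ _ => rfl,
      left_inv := fun _ => rfl, right_inv := fun _ => rfl }
  letI : NormedAddCommGroup (Copy (F × E)) := AddGroupNorm.toNormedAddCommGroup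
    { toFun := fun w => Nn δ f (ceq w)
      map_zero' := by
        show Nn δ f (ceq 0) = 0
        rw [map_zero ceq]
        exact le_antisymm (Nn_zero hδ0) (Nn_nonneg hδ0.le 0)
      add_le' := fun a b => Nn_add hδ0 (ceq a) (ceq b)
      neg' := fun a => Nn_neg hδ0 (ceq a)
      eq_zero_of_map_eq_zero' := fun a ha => by
        have hl := Nn_lower hδ0 hδ1 hf (ceq a)
        have ha' : Nn δ f (ceq a) = 0 := ha
        rw [ha'] at hl
        have h1 : ‖(ceq a).1‖ = 0 := by
          have := norm_nonneg (ceq a).1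
          have := norm_nonneg ((ceq a).2 : F)
          nlinarith
        have h2 : ‖((ceq a).2 : F)‖ = 0 := by
          have := norm_nonneg (ceq a).1
          have := norm_nonneg ((ceq a).2 : F)
          nlinarith
        have e1 : (ceq a).1 = 0 := norm_eq_zero.mp h1
        have e2 : (ceq a).2 = 0 := by
          apply Subtype.ext
          exact norm_eq_zero.mp h2
        have : ceq a = 0 := Prod.ext e1 e2
        exact ceq.injective (by simpa using this) }
  letI : NormedSpace ℝ (Copy (F × E)) :=
    { norm_smul_le := fun c w => by
        have : Nn δ f (ceq (c • w)) ≤ |c| * Nn δ f (ceq w) := by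
          have hcs : ceq (c • w) = c • (ceq w) := rfl
          rw [hcs]
          exact Nn_smul hδ0 c (ceq w)
        rw [Real.norm_eq_abs]; exact this }
  letI : FiniteDimensional ℝ (Copy (F × E)) := Module.Finite.equiv ceq.symm
  have hnorm : ∀ w : Copy (F × E), ‖w‖ = Nn δ f (ceq w) := fun w => rfl
  -- the canonical subspace E ↪ {0} × E
  let jE : ↥E →ₗ[ℝ] Copy (F × E) := ceq.symm.toLinearMap ∘ₗ LinearMap.inr ℝ F ↥E
  let E' : Subspace ℝ (Copy (F × E)) := LinearMap.range jE
  let sndmap : ↥E' →ₗ[ℝ] ↥E :=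
    (LinearMap.snd ℝ F ↥E) ∘ₗ ceq.toLinearMap ∘ₗ E'.subtype
  let T' : ↥E' →ₗ[ℝ] G := f ∘ₗ sndmap
  have hT' : ∀ e' : E', ‖T' e'‖ = ‖e'‖ := by
    rintro ⟨w, a, rfl⟩
    have h1 : ceq (jE a) = ((0 : F), a) := rfl
    have h2 : T' ⟨jE a, ⟨a, rfl⟩⟩ = f a := rfl
    rw [h2]
    show ‖f a‖ = ‖jE a‖
    rw [hnorm (jE a), h1, Nn_snd hδ0 hδ1 hf a]
  obtain ⟨S, hSe, hSiso⟩ := isGurariy_univ hG hε₀0 (Copy (F × E)) E' T' hT'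
  refine ⟨S ∘ₗ ceq.symm.toLinearMap ∘ₗ LinearMap.inl ℝ F ↥E, fun v => ?_, fun a => ?_⟩
  · -- ε-isometry
    have hv : ‖ceq.symm (v, (0:E))‖ = ‖v‖ := by
      rw [hnorm, show ceq (ceq.symm (v, (0:E))) = (v, (0:E)) from ceq.apply_symm_apply _,
        Nn_fst hδ0 hδ1 hf v]
    have := hSiso (ceq.symm (v, (0:E)))
    rw [hv] at this
    have hgood : IsEpsIsometry ε₀ (fun v : F => S (ceq.symm (v, (0:E)))) := by
      intro v'
      have hv' : ‖ceq.symm (v', (0:E))‖ = ‖v'‖ := by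
        rw [hnorm, show ceq (ceq.symm (v', (0:E))) = (v', (0:E)) from ceq.apply_symm_apply _,
          Nn_fst hδ0 hδ1 hf v']
      have := hSiso (ceq.symm (v', (0:E)))
      rw [hv'] at this
      exact this
    exact eps_mono hε₀0.le hε₀ε hgood v
  · -- closeness to f on E
    have hSa : S (ceq.symm ((0:F), a)) = f a := by
      have h1 : ceq.symm ((0:F), a) = jE a := rfl
      rw [h1]
      have := hSe ⟨jE a, ⟨a, rfl⟩⟩
      rw [this]
      rfl
    have hdiff : S (ceq.symm ((a:F), (0:E))) - f a
        = S (ceq.symm ((a:F), -a)) := by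
      rw [← hSa, ← map_sub, ← map_sub]
      congr 1
      apply Prod.ext <;> simp
    show ‖S (ceq.symm ((a:F), (0:E))) - f a‖ ≤ 2 * δ * ‖(a:F)‖
    rw [hdiff]
    have hb := (hSiso (ceq.symm ((a:F), -a))).2
    have hw : ‖ceq.symm ((a:F), -a)‖ = Nn δ f ((a:F), -a) := by
      rw [hnorm, show ceq (ceq.symm ((a:F), -a)) = ((a:F), -a) from ceq.apply_symm_apply _]
    rw [hw] at hb
    have hd := Nn_diag (f := f) hδ0 a
    have hN0 : 0 ≤ Nn δ f ((a:F), -a) := Nn_nonneg hδ0.le _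
    calc ‖S (ceq.symm ((a:F), -a))‖ ≤ (1+ε₀) * Nn δ f ((a:F), -a) := hb
      _ ≤ 2 * (δ * ‖(a:F)‖) := by
          have h2 : (1+ε₀) ≤ 2 := by linarith
          have := mul_le_mul_of_nonneg_left hd (show (0:ℝ) ≤ 1+ε₀ by linarith)
          nlinarith [norm_nonneg (a:F)]
      _ = 2 * δ * ‖(a:F)‖ := by ring

end AG
-- Layer 4: Lemma B' and the inductive step
namespace AG

theorem lemB' {X G : Type*} [NormedAddCommGroup X] [NormedSpace ℝ X]
    [NormedAddCommGroup G] [NormedSpace ℝ G]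
    (hG : IsGurariy G) (hAI : AlmostIsometric X G)
    {δ ε : ℝ} (hδ0 : 0 < δ) (hδ1 : δ ≤ 1/3) (hε : 0 < ε)
    (F : Type v) [NormedAddCommGroup F] [NormedSpace ℝ F] [FiniteDimensional ℝ F]
    (E : Subspace ℝ F) (u : E →ₗ[ℝ] X) (hu : IsEpsIsometry δ ⇑u) :
    ∃ g : F →ₗ[ℝ] X, IsEpsIsometry ε ⇑g ∧ ∀ e : E, ‖g e - u e‖ ≤ 12 * δ * ‖(e:F)‖ := by
  set γ := min (ε/4) (min δ 1) with hγ
  have hγ0 : 0 < γ := lt_min (by linarith) (lt_min hδ0 one_pos)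
  have hγε : γ ≤ ε/4 := min_le_left _ _
  have hγδ : γ ≤ δ := (min_le_right _ _).trans (min_le_left _ _)
  have hγ1 : γ ≤ 1 := (min_le_right _ _).trans (min_le_right _ _)
  obtain ⟨T, hTsurj, hTiso⟩ := hAI γ hγ0
  have hTinj := eps_injective hγ0.le T hTiso
  let Te : X ≃ₗ[ℝ] G := LinearEquiv.ofBijective T ⟨hTinj, hTsurj⟩
  have hTe : IsEpsIsometry γ ⇑Te := fun x => hTiso x
  have hTsym := eps_equiv_symm hγ0.le Te hTe
  set δ₂ := δ + 2*γ with hδ₂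
  have hδ₂0 : 0 < δ₂ := by positivity
  have hδ₂1 : δ₂ ≤ 1 := by
    have : δ₂ ≤ 3*δ := by linarith
    linarith
  have hδ₂3 : δ₂ ≤ 3*δ := by linarith
  have hTu : IsEpsIsometry δ₂ ⇑(T ∘ₗ u) := by
    have := eps_comp (ε₃ := δ₂) hδ0.le hγ0.le (by nlinarith) hu hTiso
    exact fun e => this e
  obtain ⟨g₀, hg₀iso, hg₀close⟩ := lemB hG hδ₂0 hδ₂1 hγ0 F E (T ∘ₗ u) hTu
  refine ⟨Te.symm.toLinearMap ∘ₗ g₀, ?_, ?_⟩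
  · have := eps_comp (ε₃ := ε) hγ0.le hγ0.le (by nlinarith) hg₀iso hTsym
    exact fun x => this x
  · intro e
    have h1 : u e = Te.symm (T (u e)) := (Te.symm_apply_apply (u e)).symm
    have h2 : Te.symm.toLinearMap (g₀ e) - u e = Te.symm (g₀ e - T (u e)) := by
      rw [map_sub]
      show Te.symm (g₀ e) - u e = Te.symm (g₀ e) - Te.symm (T (u e))
      rw [← h1]
    show ‖Te.symm.toLinearMap (g₀ e) - u e‖ ≤ 12 * δ * ‖(e:F)‖
    rw [h2]
    have h3 := (hTsym (g₀ e - T (u e))).2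
    have h4 := hg₀close e
    have h5 : ‖g₀ e - (T ∘ₗ u) e‖ = ‖g₀ e - T (u e)‖ := rfl
    rw [h5] at h4
    have hn1 : (0:ℝ) ≤ ‖g₀ e - T (u e)‖ := norm_nonneg _
    have hn2 : (0:ℝ) ≤ ‖(e:F)‖ := norm_nonneg _
    calc ‖Te.symm (g₀ e - T (u e))‖ ≤ (1+γ) * ‖g₀ e - T (u e)‖ := h3
      _ ≤ (1+γ) * (2 * δ₂ * ‖(e:F)‖) := by
          exact mul_le_mul_of_nonneg_left h4 (by linarith)
      _ ≤ 12 * δ * ‖(e:F)‖ := by nlinarith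

theorem exists_inverse {Z X' : Type*} [NormedAddCommGroup Z] [NormedSpace ℝ Z]
    [NormedAddCommGroup X'] [NormedSpace ℝ X']
    {δ : ℝ} (hδ0 : 0 < δ)
    (Q : Submodule ℝ Z) (g : ↥Q →ₗ[ℝ] X') (hg : IsEpsIsometry δ ⇑g)
    (R : Submodule ℝ X') (hR : ∀ c, (R.subtype ∘ₗ (Submodule.comap R.subtype (LinearMap.range g)).subtype) c ∈ LinearMap.range g) :
    ∃ v : ↥(Submodule.comap R.subtype (LinearMap.range g)) →ₗ[ℝ] Z,
      IsEpsIsometry δ ⇑v ∧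
      ∀ w, ∃ q : ↥Q, ((q : Z) = v w ∧ g q = ((w : ↥R) : X')) := by
  have hinj := eps_injective hδ0.le g hg
  let geq := LinearEquiv.ofInjective g hinj
  let toR : ↥(Submodule.comap R.subtype (LinearMap.range g)) →ₗ[ℝ] ↥(LinearMap.range g) :=
    LinearMap.codRestrict (LinearMap.range g)
      (R.subtype ∘ₗ (Submodule.comap R.subtype (LinearMap.range g)).subtype) hR
  refine ⟨Q.subtype ∘ₗ geq.symm.toLinearMap ∘ₗ toR, ?_, ?_⟩
  case refine_2 =>
    intro w
    refine ⟨geq.symm (toR w), rfl, ?_⟩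
    have h1 : g (geq.symm (toR w)) = ↑(geq (geq.symm (toR w))) :=
      (LinearEquiv.ofInjective_apply g (geq.symm (toR w))).symm
    rw [h1, geq.apply_symm_apply]
    rfl
  case refine_1 =>
    intro w
    set q := geq.symm (toR w) with hq
    have hval : (Q.subtype ∘ₗ geq.symm.toLinearMap ∘ₗ toR) w = (q : Z) := rfl
    have hgq : g q = ((w : ↥R) : X') := by
      have h1 : g q = ↑(geq q) := (LinearEquiv.ofInjective_apply g q).symm
      rw [h1, hq, geq.apply_symm_apply]
      rfl
    have hnw : ‖w‖ = ‖g q‖ := by rw [hgq]; rfl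
    have hnq : ‖(Q.subtype ∘ₗ geq.symm.toLinearMap ∘ₗ toR) w‖ = ‖q‖ := rfl
    rw [hnw, hnq]
    exact eps_bounds_symm hδ0.le (norm_nonneg q) (hg q).1 (hg q).2

set_option maxHeartbeats 1000000 in
theorem step {X G : Type*} [NormedAddCommGroup X] [NormedSpace ℝ X]
    [NormedAddCommGroup G] [NormedSpace ℝ G]
    (hG : IsGurariy G) (hAI : AlmostIsometric X G)
    {δ : ℝ} (hδ0 : 0 < δ) (hδ1 : δ ≤ 1/4)
    (E : Submodule ℝ X) (hE : FiniteDimensional ℝ E) (f : E →ₗ[ℝ] G)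
    (hf : IsEpsIsometry δ ⇑f) (x' : X) (y' : G) :
    ∃ (E' : Submodule ℝ X) (f' : ↥E' →ₗ[ℝ] G),
      FiniteDimensional ℝ ↥E' ∧ E ≤ E' ∧ x' ∈ E' ∧
      IsEpsIsometry (δ/2) ⇑f' ∧
      (∀ (x : X) (hx : x ∈ E) (hx' : x ∈ E'), ‖f' ⟨x, hx'⟩ - f ⟨x, hx⟩‖ ≤ 30*δ*‖x‖) ∧
      (∃ w : ↥E', ‖f' w - y'‖ ≤ δ*‖y'‖ ∧ ‖w‖ ≤ 2*‖y'‖) := by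
  haveI := hE
  have hfinj := eps_injective hδ0.le f hf
  set ranf := LinearMap.range f with hranf
  set F' := ranf ⊔ (ℝ ∙ y') with hF'
  haveI : FiniteDimensional ℝ ↥F' := Submodule.finiteDimensional_sup _ _
  -- inverse of f, defined on the copy of ranf inside F'
  obtain ⟨u, huiso, huspec⟩ := exists_inverse hδ0 E f hf F' (fun c => c.2)
  -- extend u to F'
  obtain ⟨g, hgiso, hgu⟩ := lemB' hG hAI hδ0 (by linarith) (by positivity : (0:ℝ) < δ/4)
    ↥F' (Submodule.comap F'.subtype ranf) u huiso
  have hg4 : (0:ℝ) < δ/4 := by positivity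
  have hginj := eps_injective hg4.le g hgiso
  set rang := LinearMap.range g with hrang
  set Enext := (E ⊔ rang) ⊔ (ℝ ∙ x') with hEnext
  haveI : FiniteDimensional ℝ ↥Enext :=
    Submodule.finiteDimensional_sup _ _
  -- inverse of g, defined on the copy of rang inside Enext
  obtain ⟨v, hviso, hvspec⟩ := exists_inverse hg4 F' g hgiso Enext (fun c => c.2)
  -- extend (g)⁻¹ to Enext
  obtain ⟨f', hf'iso, hf'v⟩ := lemB hG hg4 (by linarith) (by positivity : (0:ℝ) < δ/2)
    ↥Enext (Submodule.comap Enext.subtype rang) v hviso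
  -- uniqueness of v values
  have vchar : ∀ (w : ↥(Submodule.comap Enext.subtype rang)) (q : ↥F'),
      g q = ((w : ↥Enext) : X) → v w = (q : G) := by
    intro w q hq
    obtain ⟨q0, hq01, hq02⟩ := hvspec w
    have : q0 = q := hginj (by rw [hq02, hq])
    rw [← hq01, this]
  refine ⟨Enext, f', inferInstance, le_trans le_sup_left le_sup_left,
    Submodule.mem_sup_right (Submodule.mem_span_singleton_self x'),
    hf'iso, ?_, ?_⟩
  · -- drift estimate
    intro x hx hx'
    set a : ↥E := ⟨x, hx⟩ with ha
    have hxnorm : ‖a‖ = ‖x‖ := rfl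
    have hfaF' : f a ∈ F' := Submodule.mem_sup_left ⟨a, rfl⟩
    have hfa_ranf : (⟨f a, hfaF'⟩ : ↥F') ∈ Submodule.comap F'.subtype ranf := ⟨a, rfl⟩
    set e₁ : ↥(Submodule.comap F'.subtype ranf) := ⟨⟨f a, hfaF'⟩, hfa_ranf⟩ with he₁
    have hue₁ : u e₁ = x := by
      obtain ⟨q, hq1, hq2⟩ := huspec e₁
      have hq2' : f q = f a := hq2
      have : q = a := hfinj hq2'
      rw [← hq1, this]
    have key1 : ‖g ↑e₁ - x‖ ≤ 15*δ*‖x‖ := by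
      have h := hgu e₁
      rw [hue₁] at h
      have hne : ‖((e₁ : ↥F') : ↥F')‖ = ‖f a‖ := rfl
      have hfa : ‖f a‖ ≤ (1+δ)*‖x‖ := (hf a).2
      have hnx : (0:ℝ) ≤ ‖x‖ := norm_nonneg x
      calc ‖g ↑e₁ - x‖ ≤ 12*δ*‖((e₁ : ↥F') : ↥F')‖ := h
        _ = 12*δ*‖f a‖ := by rw [hne]
        _ ≤ 12*δ*((1+δ)*‖x‖) := by
            exact mul_le_mul_of_nonneg_left hfa (by positivity)
        _ ≤ 15*δ*‖x‖ := by nlinarith [mul_le_mul_of_nonneg_right (mul_le_mul_of_nonneg_left hδ1 hδ0.le) hnx]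
    set w : X := g ↑e₁ with hw
    have hwE : w ∈ Enext := Submodule.mem_sup_left (Submodule.mem_sup_right ⟨↑e₁, rfl⟩)
    have hwcomap : (⟨w, hwE⟩ : ↥Enext) ∈ Submodule.comap Enext.subtype rang := ⟨↑e₁, rfl⟩
    set ww : ↥(Submodule.comap Enext.subtype rang) := ⟨⟨w, hwE⟩, hwcomap⟩ with hww
    have hvww : v ww = f a := vchar ww ↑e₁ rfl
    have key2 : ‖f' ↑ww - f a‖ ≤ (δ/2)*‖w‖ := by
      have h := hf'v ww
      rw [hvww] at h
      have hne : ‖((ww : ↥Enext) : ↥Enext)‖ = ‖w‖ := rfl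
      calc ‖f' ↑ww - f a‖ ≤ 2*(δ/4)*‖((ww : ↥Enext) : ↥Enext)‖ := h
        _ = (δ/2)*‖w‖ := by rw [hne]; ring
    have hnx : (0:ℝ) ≤ ‖x‖ := norm_nonneg x
    have key3 : ‖w‖ ≤ 5*‖x‖ := by
      have h : ‖w‖ ≤ ‖w - x‖ + ‖x‖ := by
        have heq : w = (w - x) + x := by abel
        calc ‖w‖ = ‖(w - x) + x‖ := by rw [← heq]
          _ ≤ ‖w - x‖ + ‖x‖ := norm_add_le _ _
      have := key1
      nlinarith
    have key4 : ‖f' ⟨x, hx'⟩ - f' ↑ww‖ ≤ (1+δ/2)*(15*δ*‖x‖) := by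
      have heq : f' ⟨x, hx'⟩ - f' ↑ww = f' (⟨x, hx'⟩ - ↑ww) := (map_sub f' _ _).symm
      rw [heq]
      have h := (hf'iso (⟨x, hx'⟩ - ↑ww)).2
      have hne : ‖(⟨x, hx'⟩ - ↑ww : ↥Enext)‖ = ‖x - w‖ := rfl
      rw [hne] at h
      have hxw : ‖x - w‖ ≤ 15*δ*‖x‖ := by
        rw [show x - w = -(w - x) by abel, norm_neg]
        exact key1
      calc ‖f' (⟨x, hx'⟩ - ↑ww)‖ ≤ (1+δ/2)*‖x - w‖ := h
        _ ≤ (1+δ/2)*(15*δ*‖x‖) := by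
            exact mul_le_mul_of_nonneg_left hxw (by linarith)
    have heq2 : f' ⟨x, hx'⟩ - f ⟨x, hx⟩ = (f' ⟨x, hx'⟩ - f' ↑ww) + (f' ↑ww - f a) := by
      rw [ha]; abel
    calc ‖f' ⟨x, hx'⟩ - f ⟨x, hx⟩‖
        = ‖(f' ⟨x, hx'⟩ - f' ↑ww) + (f' ↑ww - f a)‖ := by rw [heq2]
      _ ≤ ‖f' ⟨x, hx'⟩ - f' ↑ww‖ + ‖f' ↑ww - f a‖ := norm_add_le _ _
      _ ≤ (1+δ/2)*(15*δ*‖x‖) + (δ/2)*(5*‖x‖) := by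
          have := mul_le_mul_of_nonneg_left key3 (by positivity : (0:ℝ) ≤ δ/2)
          linarith [key4, key2, this]
      _ ≤ 30*δ*‖x‖ := by nlinarith [mul_le_mul_of_nonneg_right (mul_le_mul_of_nonneg_left hδ1 hδ0.le) hnx]
  · -- approximate y'
    have hy'F' : y' ∈ F' := Submodule.mem_sup_right (Submodule.mem_span_singleton_self y')
    set yF : ↥F' := ⟨y', hy'F'⟩ with hyF
    have hwyE : g yF ∈ Enext := Submodule.mem_sup_left (Submodule.mem_sup_right ⟨yF, rfl⟩)
    have hwycomap : (⟨g yF, hwyE⟩ : ↥Enext) ∈ Submodule.comap Enext.subtype rang := ⟨yF, rfl⟩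
    set wwy : ↥(Submodule.comap Enext.subtype rang) := ⟨⟨g yF, hwyE⟩, hwycomap⟩ with hwwy
    have hvwwy : v wwy = y' := vchar wwy yF rfl
    have hgyF : ‖g yF‖ ≤ (1+δ/4)*‖y'‖ := by
      have := (hgiso yF).2
      have hne : ‖yF‖ = ‖y'‖ := rfl
      rwa [hne] at this
    have hny : (0:ℝ) ≤ ‖y'‖ := norm_nonneg y'
    refine ⟨↑wwy, ?_, ?_⟩
    · have h := hf'v wwy
      rw [hvwwy] at h
      have hne : ‖((wwy : ↥Enext) : ↥Enext)‖ = ‖g yF‖ := rfl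
      rw [hne] at h
      calc ‖f' ↑wwy - y'‖ ≤ 2*(δ/4)*‖g yF‖ := h
        _ ≤ 2*(δ/4)*((1+δ/4)*‖y'‖) := by
            exact mul_le_mul_of_nonneg_left hgyF (by positivity)
        _ ≤ δ*‖y'‖ := by nlinarith [mul_le_mul_of_nonneg_right (mul_le_mul_of_nonneg_left hδ1 hδ0.le) hny]
    · have hne : ‖(↑wwy : ↥Enext)‖ = ‖g yF‖ := rfl
      rw [hne]
      calc ‖g yF‖ ≤ (1+δ/4)*‖y'‖ := hgyF
        _ ≤ 2*‖y'‖ := by nlinarith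

end AG
-- Layer 5: chain construction
namespace AG

noncomputable def del (n : ℕ) : ℝ := (1/2)^(n+2)

theorem del_pos (n : ℕ) : 0 < del n := by unfold del; positivity

theorem del_le (n : ℕ) : del n ≤ 1/4 := by
  unfold del
  calc ((1:ℝ)/2)^(n+2) ≤ (1/2)^(0+2) :=
        pow_le_pow_of_le_one (by norm_num) (by norm_num) (by omega)
    _ = 1/4 := by norm_num

theorem del_succ (n : ℕ) : del (n+1) = del n / 2 := by
  unfold del
  rw [pow_succ']
  ring

theorem del_anti {m n : ℕ} (h : m ≤ n) : del n ≤ del m :=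
  pow_le_pow_of_le_one (by norm_num) (by norm_num) (by omega)

theorem del_small {c : ℝ} (hc : 0 < c) : ∃ j : ℕ, del j < c := by
  obtain ⟨j, hj⟩ := exists_pow_lt_of_lt_one hc (show (1:ℝ)/2 < 1 by norm_num)
  refine ⟨j, lt_of_le_of_lt ?_ hj⟩
  calc del j = (1/2)^(j+2) := rfl
    _ ≤ (1/2)^j := pow_le_pow_of_le_one (by norm_num) (by norm_num) (by omega)

structure Stg (X G : Type*) [NormedAddCommGroup X] [NormedSpace ℝ X]
    [NormedAddCommGroup G] [NormedSpace ℝ G] where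
  E : Submodule ℝ X
  f : ↥E →ₗ[ℝ] G

variable {X G : Type*} [NormedAddCommGroup X] [NormedSpace ℝ X]
  [NormedAddCommGroup G] [NormedSpace ℝ G]

def ChInv (n : ℕ) (s : Stg X G) : Prop :=
  FiniteDimensional ℝ ↥s.E ∧ IsEpsIsometry (del n) ⇑s.f

def ChRel (n : ℕ) (x' : X) (y' : G) (s t : Stg X G) : Prop :=
  s.E ≤ t.E ∧ x' ∈ t.E ∧
  (∀ (x : X) (hx : x ∈ s.E) (hx' : x ∈ t.E),
    ‖t.f ⟨x, hx'⟩ - s.f ⟨x, hx⟩‖ ≤ 30 * del n * ‖x‖) ∧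
  (∃ w : ↥t.E, ‖t.f w - y'‖ ≤ del n * ‖y'‖ ∧ ‖w‖ ≤ 2 * ‖y'‖)

theorem step' (hG : IsGurariy G) (hAI : AlmostIsometric X G)
    (n : ℕ) (x' : X) (y' : G) (s : Stg X G) (hs : ChInv n s) :
    ∃ t : Stg X G, ChInv (n+1) t ∧ ChRel n x' y' s t := by
  obtain ⟨E', f', hfin, hle, hx', hiso, hdrift, hy⟩ :=
    step hG hAI (del_pos n) (del_le n) s.E hs.1 s.f hs.2 x' y'
  refine ⟨⟨E', f'⟩, ⟨hfin, ?_⟩, hle, hx', hdrift, hy⟩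
  rw [del_succ]
  exact hiso

theorem base_inv : ChInv 0 (⟨⊥, 0⟩ : Stg X G) := by
  constructor
  · infer_instance
  · intro e
    have he : (e : X) = 0 := (Submodule.mem_bot ℝ).mp e.2
    have hne : ‖e‖ = 0 := by
      have : ‖e‖ = ‖(e : X)‖ := rfl
      rw [this, he, norm_zero]
    have h0 : (0 : ↥(⊥ : Submodule ℝ X) →ₗ[ℝ] G) e = 0 := rfl
    rw [h0, hne, norm_zero]
    norm_num

/-- parameter pack -/
structure Pk (X G : Type*) [NormedAddCommGroup X] [NormedSpace ℝ X]
    [NormedAddCommGroup G] [NormedSpace ℝ G] : Type _ where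
  hG : IsGurariy G
  hAI : AlmostIsometric X G
  xs : ℕ → X
  ys : ℕ → G

variable (P : Pk X G)

noncomputable def chain : (n : ℕ) → {s : Stg X G // ChInv n s} := fun n =>
  Nat.rec ⟨⟨⊥, 0⟩, base_inv⟩
    (fun k ih => ⟨Classical.choose (step' P.hG P.hAI k (P.xs k) (P.ys k) ih.1 ih.2),
      (Classical.choose_spec (step' P.hG P.hAI k (P.xs k) (P.ys k) ih.1 ih.2)).1⟩) n

noncomputable def chE (n : ℕ) : Submodule ℝ X := (chain P n).1.E

noncomputable def chf (n : ℕ) : ↥(chE P n) →ₗ[ℝ] G := (chain P n).1.f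

theorem chain_fin (n : ℕ) : FiniteDimensional ℝ ↥(chE P n) := (chain P n).2.1

theorem chain_iso (n : ℕ) : IsEpsIsometry (del n) ⇑(chf P n) := (chain P n).2.2

theorem chain_rel (n : ℕ) :
    ChRel n (P.xs n) (P.ys n) (chain P n).1 (chain P (n+1)).1 :=
  (Classical.choose_spec
    (step' P.hG P.hAI n (P.xs n) (P.ys n) (chain P n).1 (chain P n).2)).2

theorem chain_mono : ∀ {m n : ℕ}, m ≤ n → chE P m ≤ chE P n := by
  intro m n h
  induction n, h using Nat.le_induction with
  | base => exact le_rfl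
  | succ n hmn ih => exact ih.trans (chain_rel P n).1

theorem chain_drift : ∀ (n m : ℕ), n ≤ m → ∀ (x : X) (hx : x ∈ chE P n)
    (hx' : x ∈ chE P m),
    ‖chf P m ⟨x, hx'⟩ - chf P n ⟨x, hx⟩‖ ≤ (60 * del n - 60 * del m) * ‖x‖ := by
  intro n m h
  induction m, h using Nat.le_induction with
  | base =>
    intro x hx hx'
    have : chf P n ⟨x, hx'⟩ = chf P n ⟨x, hx⟩ := rfl
    rw [this, sub_self, norm_zero, sub_self, zero_mul]
  | succ m hnm ih =>
    intro x hx hx'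
    have hxm : x ∈ chE P m := chain_mono P hnm hx
    have h1 := ih x hx hxm
    have h2 := (chain_rel P m).2.2.1 x hxm hx'
    have heq : chf P (m+1) ⟨x, hx'⟩ - chf P n ⟨x, hx⟩ =
        (chf P (m+1) ⟨x, hx'⟩ - chf P m ⟨x, hxm⟩) + (chf P m ⟨x, hxm⟩ - chf P n ⟨x, hx⟩) := by
      abel
    have hsucc : del (m+1) = del m / 2 := del_succ m
    calc ‖chf P (m+1) ⟨x, hx'⟩ - chf P n ⟨x, hx⟩‖
        = ‖(chf P (m+1) ⟨x, hx'⟩ - chf P m ⟨x, hxm⟩) + (chf P m ⟨x, hxm⟩ - chf P n ⟨x, hx⟩)‖ := by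
          rw [heq]
      _ ≤ ‖chf P (m+1) ⟨x, hx'⟩ - chf P m ⟨x, hxm⟩‖ + ‖chf P m ⟨x, hxm⟩ - chf P n ⟨x, hx⟩‖ :=
          norm_add_le _ _
      _ ≤ 30 * del m * ‖x‖ + (60 * del n - 60 * del m) * ‖x‖ := by
          have h2' : ‖chf P (m+1) ⟨x, hx'⟩ - chf P m ⟨x, hxm⟩‖ ≤ 30 * del m * ‖x‖ := h2
          linarith
      _ = (60 * del n - 60 * del (m+1)) * ‖x‖ := by rw [hsucc]; ring

/-- the union of the chain -/
noncomputable def DD : Submodule ℝ X := ⨆ n, chE P n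

theorem mem_DD {x : X} (hx : x ∈ DD P) : ∃ n, x ∈ chE P n := by
  let a : ℕ →o Submodule ℝ X := ⟨fun n => chE P n, fun m n h => chain_mono P h⟩
  exact (Submodule.mem_iSup_of_chain a x).mp hx

theorem chE_le_DD (n : ℕ) : chE P n ≤ DD P := le_iSup (fun n => chE P n) n

open Classical in
noncomputable def aseq (d : ↥(DD P)) (k : ℕ) : G :=
  if h : (d : X) ∈ chE P k then chf P k ⟨d, h⟩ else 0

theorem aseq_close (d : ↥(DD P)) (m : ℕ) (hm : (d : X) ∈ chE P m)
    (k : ℕ) (hk : m ≤ k) :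
    ‖aseq P d k - chf P m ⟨d, hm⟩‖ ≤ 60 * del m * ‖(d : X)‖ := by
  have hk' : (d : X) ∈ chE P k := chain_mono P hk hm
  unfold aseq
  rw [dif_pos hk']
  refine (chain_drift P m k hk (d : X) hm hk').trans ?_
  have := del_pos k
  have := norm_nonneg (d : X)
  nlinarith

section limit
variable [CompleteSpace G]

theorem aseq_cauchy (d : ↥(DD P)) : CauchySeq (aseq P d) := by
  rw [Metric.cauchySeq_iff']
  intro ε hε
  obtain ⟨n₀, hn₀⟩ := mem_DD P d.2
  obtain ⟨j, hj⟩ := del_small (show 0 < ε / (60 * (‖(d:X)‖ + 1)) by positivity)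
  refine ⟨max n₀ j, fun n hn => ?_⟩
  have hmem : (d : X) ∈ chE P (max n₀ j) := chain_mono P (le_max_left _ _) hn₀
  have h1 := aseq_close P d (max n₀ j) hmem n hn
  have h2 : aseq P d (max n₀ j) = chf P (max n₀ j) ⟨d, hmem⟩ := by
    unfold aseq; rw [dif_pos hmem]
  rw [dist_eq_norm, h2]
  refine lt_of_le_of_lt h1 ?_
  have hdel : del (max n₀ j) ≤ del j := del_anti (le_max_right _ _)
  have hd1 : ‖(d:X)‖ < ‖(d:X)‖ + 1 := by linarith
  have h60 : (0:ℝ) < 60 * (‖(d:X)‖ + 1) := by positivity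
  calc 60 * del (max n₀ j) * ‖(d:X)‖ ≤ 60 * del j * (‖(d:X)‖+1) := by
        have := del_pos (max n₀ j)
        have := norm_nonneg (d:X)
        nlinarith
    _ < ε := by
        have hj' : del j * (60 * (‖(d:X)‖+1)) < ε := (lt_div_iff₀ h60).mp hj
        nlinarith

noncomputable def ell (d : ↥(DD P)) : G := Filter.limUnder Filter.atTop (aseq P d)

end limit

end AG
-- Layer 6: the limit map
namespace AG

theorem norm_eq_zero_forall {A : Type*} [NormedAddCommGroup A] {a : A}
    (h : ∀ η : ℝ, 0 < η → ‖a‖ ≤ η) : a = 0 := by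
  have : ‖a‖ ≤ 0 := le_of_forall_pos_le_add (fun ε hε => by simpa using h ε hε)
  exact norm_le_zero_iff.mp this

variable {X G : Type*} [NormedAddCommGroup X] [NormedSpace ℝ X]
  [NormedAddCommGroup G] [NormedSpace ℝ G]
variable (P : Pk X G) [CompleteSpace G]

theorem ell_tendsto (d : ↥(DD P)) :
    Filter.Tendsto (aseq P d) Filter.atTop (nhds (ell P d)) :=
  (aseq_cauchy P d).tendsto_limUnder

theorem ell_close (d : ↥(DD P)) (m : ℕ) (hm : (d:X) ∈ chE P m) :
    ‖ell P d - chf P m ⟨d, hm⟩‖ ≤ 60 * del m * ‖(d:X)‖ := by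
  have ht : Filter.Tendsto (fun k => ‖aseq P d k - chf P m ⟨d, hm⟩‖) Filter.atTop
      (nhds ‖ell P d - chf P m ⟨d, hm⟩‖) := ((ell_tendsto P d).sub tendsto_const_nhds).norm
  apply le_of_tendsto ht
  filter_upwards [Filter.eventually_ge_atTop m] with k hk
  exact aseq_close P d m hm k hk

theorem ell_add (d d' : ↥(DD P)) : ell P (d + d') = ell P d + ell P d' := by
  have key : ∀ η : ℝ, 0 < η → ‖ell P (d+d') - (ell P d + ell P d')‖ ≤ η := by
    intro η hη
    obtain ⟨n₁, h₁⟩ := mem_DD P d.2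
    obtain ⟨n₂, h₂⟩ := mem_DD P d'.2
    set C : ℝ := ‖(d:X)‖ + ‖(d':X)‖ + ‖((d+d' : ↥(DD P)):X)‖ + 1 with hCdef
    have hC : 0 < C := by positivity
    obtain ⟨j, hj⟩ := del_small (show 0 < η / (60*C) by positivity)
    set m := max (max n₁ n₂) j with hm
    have hd : (d:X) ∈ chE P m := chain_mono P ((le_max_left n₁ n₂).trans (le_max_left _ _)) h₁
    have hd' : (d':X) ∈ chE P m := chain_mono P ((le_max_right n₁ n₂).trans (le_max_left _ _)) h₂
    have hsum : ((d+d' : ↥(DD P)):X) ∈ chE P m := by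
      have hcoe : ((d+d' : ↥(DD P)):X) = (d:X) + (d':X) := rfl
      rw [hcoe]; exact add_mem hd hd'
    have hfadd : chf P m ⟨((d+d':↥(DD P)):X), hsum⟩ = chf P m ⟨(d:X),hd⟩ + chf P m ⟨(d':X),hd'⟩ := by
      have hsube : (⟨((d+d':↥(DD P)):X), hsum⟩ : ↥(chE P m)) = ⟨(d:X),hd⟩ + ⟨(d':X),hd'⟩ := rfl
      rw [hsube, map_add]
    have e1 := ell_close P (d+d') m hsum
    have e2 := ell_close P d m hd
    have e3 := ell_close P d' m hd'
    have heq : ell P (d+d') - (ell P d + ell P d')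
        = ((ell P (d+d') - chf P m ⟨_, hsum⟩) - (ell P d - chf P m ⟨_,hd⟩))
          - (ell P d' - chf P m ⟨_,hd'⟩) := by
      rw [hfadd]; abel
    have hnormle : ‖ell P (d+d') - (ell P d + ell P d')‖
        ≤ ‖ell P (d+d') - chf P m ⟨_, hsum⟩‖ + ‖ell P d - chf P m ⟨_,hd⟩‖
          + ‖ell P d' - chf P m ⟨_,hd'⟩‖ := by
      rw [heq]
      refine (norm_sub_le _ _).trans ?_
      exact add_le_add (norm_sub_le _ _) le_rfl
    have hdel : del m ≤ del j := del_anti (le_max_right _ _)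
    have hjη : del j * (60*C) < η := (lt_div_iff₀ (by positivity)).mp hj
    have hdm := del_pos m
    have hdj := del_pos j
    have h1n : (0:ℝ) ≤ ‖((d+d':↥(DD P)):X)‖ := norm_nonneg _
    have h2n : (0:ℝ) ≤ ‖(d:X)‖ := norm_nonneg _
    have h3n : (0:ℝ) ≤ ‖(d':X)‖ := norm_nonneg _
    nlinarith [mul_le_mul_of_nonneg_right hdel h1n, mul_le_mul_of_nonneg_right hdel h2n,
      mul_le_mul_of_nonneg_right hdel h3n]
  exact sub_eq_zero.mp (norm_eq_zero_forall key)

theorem ell_smul (c : ℝ) (d : ↥(DD P)) : ell P (c • d) = c • ell P d := by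
  have key : ∀ η : ℝ, 0 < η → ‖ell P (c • d) - c • ell P d‖ ≤ η := by
    intro η hη
    obtain ⟨n₁, h₁⟩ := mem_DD P d.2
    set C : ℝ := ‖((c • d : ↥(DD P)):X)‖ + |c| * ‖(d:X)‖ + 1 with hCdef
    have hC : 0 < C := by positivity
    obtain ⟨j, hj⟩ := del_small (show 0 < η / (60*C) by positivity)
    set m := max n₁ j with hm
    have hd : (d:X) ∈ chE P m := chain_mono P (le_max_left _ _) h₁
    have hsm : ((c • d : ↥(DD P)):X) ∈ chE P m := by
      have hcoe : ((c • d : ↥(DD P)):X) = c • (d:X) := rfl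
      rw [hcoe]; exact Submodule.smul_mem _ c hd
    have hfs : chf P m ⟨((c • d:↥(DD P)):X), hsm⟩ = c • chf P m ⟨(d:X),hd⟩ := by
      have hsube : (⟨((c • d:↥(DD P)):X), hsm⟩ : ↥(chE P m)) = c • ⟨(d:X),hd⟩ := rfl
      rw [hsube, map_smul]
    have e1 := ell_close P (c • d) m hsm
    have e2 := ell_close P d m hd
    have heq : ell P (c • d) - c • ell P d
        = (ell P (c • d) - chf P m ⟨_, hsm⟩) - c • (ell P d - chf P m ⟨_,hd⟩) := by
      rw [hfs, smul_sub]; abel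
    have hnormle : ‖ell P (c • d) - c • ell P d‖
        ≤ ‖ell P (c • d) - chf P m ⟨_, hsm⟩‖ + |c| * ‖ell P d - chf P m ⟨_,hd⟩‖ := by
      rw [heq]
      refine (norm_sub_le _ _).trans ?_
      rw [norm_smul, Real.norm_eq_abs]
    have hdel : del m ≤ del j := del_anti (le_max_right _ _)
    have hjη : del j * (60*C) < η := (lt_div_iff₀ (by positivity)).mp hj
    have hdm := del_pos m
    have hdj := del_pos j
    have h1n : (0:ℝ) ≤ ‖((c • d:↥(DD P)):X)‖ := norm_nonneg _
    have h2n : (0:ℝ) ≤ ‖(d:X)‖ := norm_nonneg _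
    have hcn : (0:ℝ) ≤ |c| := abs_nonneg c
    nlinarith [mul_le_mul_of_nonneg_right hdel h1n,
      mul_le_mul_of_nonneg_right hdel (mul_nonneg hcn h2n),
      mul_le_mul_of_nonneg_left e2 hcn]
  exact sub_eq_zero.mp (norm_eq_zero_forall key)

theorem ell_norm (d : ↥(DD P)) : ‖ell P d‖ = ‖(d:X)‖ := by
  have hup : ‖ell P d‖ ≤ ‖(d:X)‖ := by
    apply le_of_forall_pos_le_add
    intro η hη
    obtain ⟨n₁, h₁⟩ := mem_DD P d.2
    obtain ⟨j, hj⟩ := del_small (show 0 < η / (61*(‖(d:X)‖+1)) by positivity)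
    set m := max n₁ j with hm
    have hd : (d:X) ∈ chE P m := chain_mono P (le_max_left _ _) h₁
    have e1 := ell_close P d m hd
    have hiso := (chain_iso P m ⟨(d:X), hd⟩).2
    have hnd : ‖(⟨(d:X), hd⟩ : ↥(chE P m))‖ = ‖(d:X)‖ := rfl
    rw [hnd] at hiso
    have htri : ‖ell P d‖ ≤ ‖ell P d - chf P m ⟨(d:X),hd⟩‖ + ‖chf P m ⟨(d:X),hd⟩‖ := by
      have heq : ell P d = (ell P d - chf P m ⟨(d:X),hd⟩) + chf P m ⟨(d:X),hd⟩ := by abel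
      calc ‖ell P d‖ = ‖(ell P d - chf P m ⟨(d:X),hd⟩) + chf P m ⟨(d:X),hd⟩‖ := by rw [← heq]
        _ ≤ _ := norm_add_le _ _
    have hdel : del m ≤ del j := del_anti (le_max_right _ _)
    have hjη : del j * (61*(‖(d:X)‖+1)) < η := (lt_div_iff₀ (by positivity)).mp hj
    have hdm := del_pos m
    have h2n : (0:ℝ) ≤ ‖(d:X)‖ := norm_nonneg _
    nlinarith [mul_le_mul_of_nonneg_right hdel h2n]
  have hlow : ‖(d:X)‖ ≤ ‖ell P d‖ := by
    apply le_of_forall_pos_le_add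
    intro η hη
    obtain ⟨n₁, h₁⟩ := mem_DD P d.2
    obtain ⟨j, hj⟩ := del_small (show 0 < η / (200*(‖(d:X)‖+1)) by positivity)
    set m := max n₁ j with hm
    have hd : (d:X) ∈ chE P m := chain_mono P (le_max_left _ _) h₁
    have e1 := ell_close P d m hd
    have hiso := chain_iso P m ⟨(d:X), hd⟩
    have hnd : ‖(⟨(d:X), hd⟩ : ↥(chE P m))‖ = ‖(d:X)‖ := rfl
    rw [hnd] at hiso
    have hb := (eps_bounds_symm (del_pos m).le (norm_nonneg _) hiso.1 hiso.2).2
    -- hb : ‖(d:X)‖ ≤ (1 + del m) * ‖chf P m ⟨(d:X),hd⟩‖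
    have htri : ‖chf P m ⟨(d:X),hd⟩‖ ≤ ‖ell P d‖ + 60 * del m * ‖(d:X)‖ := by
      have h := norm_sub_trick (chf P m ⟨(d:X),hd⟩) (ell P d - chf P m ⟨(d:X),hd⟩)
      have heq : chf P m ⟨(d:X),hd⟩ + (ell P d - chf P m ⟨(d:X),hd⟩) = ell P d := by abel
      rw [heq] at h
      have hnegnorm : ‖ell P d - chf P m ⟨(d:X),hd⟩‖ ≤ 60 * del m * ‖(d:X)‖ := e1
      linarith
    have hdel : del m ≤ del j := del_anti (le_max_right _ _)
    have hjη : del j * (200*(‖(d:X)‖+1)) < η := (lt_div_iff₀ (by positivity)).mp hj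
    have hdm := del_pos m
    have hdm4 := del_le m
    have h2n : (0:ℝ) ≤ ‖(d:X)‖ := norm_nonneg _
    have hellb : ‖ell P d‖ ≤ ‖(d:X)‖ := hup
    have helln : (0:ℝ) ≤ ‖ell P d‖ := norm_nonneg _
    nlinarith [mul_le_mul_of_nonneg_right hdel h2n,
      mul_le_mul_of_nonneg_left htri (show (0:ℝ) ≤ 1 + del m by linarith),
      mul_le_mul_of_nonneg_right (mul_le_mul_of_nonneg_right hdel h2n)
        (show (0:ℝ) ≤ 60 * (1 + del m) by linarith)]
  exact le_antisymm hup hlow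

noncomputable def ellL : ↥(DD P) →ₗ[ℝ] G :=
  { toFun := ell P
    map_add' := ell_add P
    map_smul' := fun c d => by
      show ell P (c • d) = (RingHom.id ℝ) c • ell P d
      rw [ell_smul P c d]; rfl }

noncomputable def ellC : ↥(DD P) →L[ℝ] G :=
  LinearMap.mkContinuous (ellL P) 1 (fun d => by
    rw [one_mul]
    exact le_of_eq (ell_norm P d))

theorem ellC_apply (d : ↥(DD P)) : ellC P d = ell P d := rfl

end AG

-- Layer 7: main theorem
open AG in
theorem almost_isometric_to_separable_gurariy_isometric
    (X : Type*) [NormedAddCommGroup X] [NormedSpace ℝ X] [CompleteSpace X]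
    (G : Type*) [NormedAddCommGroup G] [NormedSpace ℝ G] [CompleteSpace G]
    [SeparableSpace G] (hG : IsGurariy G) (h : AlmostIsometric X G) :
    ∃ T : X →ₗ[ℝ] G, Function.Surjective T ∧ ∀ x : X, ‖T x‖ = ‖x‖ := by
  classical
  haveI : Nonempty G := ⟨0⟩
  obtain ⟨ys0, hys0⟩ := TopologicalSpace.exists_dense_seq G
  -- a global 1-isometry, used to transport separability
  obtain ⟨T₁, hT₁s, hT₁iso⟩ := h 1 one_pos
  have hT₁inj := eps_injective (by norm_num) T₁ hT₁iso
  let Te : X ≃ₗ[ℝ] G := LinearEquiv.ofBijective T₁ ⟨hT₁inj, hT₁s⟩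
  have hTe : IsEpsIsometry 1 ⇑Te := fun x => hT₁iso x
  have hTsym := eps_equiv_symm (by norm_num) Te hTe
  let Tc : G →L[ℝ] X := LinearMap.mkContinuous Te.symm.toLinearMap 2
    (fun y => by
      have h2 := (hTsym y).2
      have : ‖Te.symm.toLinearMap y‖ = ‖Te.symm y‖ := rfl
      rw [this]
      norm_num at h2
      linarith)
  let xs : ℕ → X := fun k => Te.symm (ys0 k)
  have hxs : DenseRange xs := by
    have hsurj : Function.Surjective (⇑Tc) := fun x =>
      ⟨Te x, Te.symm_apply_apply x⟩
    exact DenseRange.comp (g := ⇑Tc) (f := ys0) hsurj.denseRange hys0 Tc.continuous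
  -- the parameter pack and chain
  let P : Pk X G := ⟨hG, h, xs, fun n => ys0 (Nat.unpair n).1⟩
  have hDdense : Dense (DD P : Set X) := by
    have hsub : Set.range xs ⊆ (DD P : Set X) := by
      rintro _ ⟨k, rfl⟩
      exact chE_le_DD P (k+1) (chain_rel P k).2.1
    exact hxs.mono hsub
  have hdr : DenseRange ⇑((DD P).subtypeL) := by
    show Dense (Set.range _)
    have hr : Set.range ⇑((DD P).subtypeL) = (DD P : Set X) := Subtype.range_coe
    rw [hr]; exact hDdense
  have hui : IsUniformInducing ⇑((DD P).subtypeL) :=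
    isUniformEmbedding_subtype_val.isUniformInducing
  let U : X →L[ℝ] G := (ellC P).extend ((DD P).subtypeL)
  have hUeq : ∀ d : ↥(DD P), U (d : X) = ell P d := fun d =>
    ContinuousLinearMap.extend_eq (f := ellC P) (e := (DD P).subtypeL) hdr hui d
  have hUnorm : ∀ x : X, ‖U x‖ = ‖x‖ := by
    have hclosed : IsClosed {x : X | ‖U x‖ = ‖x‖} :=
      isClosed_eq U.continuous.norm continuous_norm
    have hsub : (DD P : Set X) ⊆ {x : X | ‖U x‖ = ‖x‖} := fun x hx => by
      have h1 := hUeq ⟨x, hx⟩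
      have h2 := ell_norm P ⟨x, hx⟩
      simp only [Set.mem_setOf_eq]
      rw [h1, h2]
    intro x
    exact (hclosed.closure_subset_iff.mpr hsub) (hDdense x)
  have hisoU : Isometry ⇑U := AddMonoidHomClass.isometry_of_norm U hUnorm
  have hclosedrange : IsClosed (Set.range ⇑U) :=
    hisoU.isClosedEmbedding.isClosed_range
  have hdenserange : ∀ y : G, y ∈ closure (Set.range ⇑U) := by
    intro y
    rw [Metric.mem_closure_iff]
    intro ε hε
    obtain ⟨k, hk⟩ := Metric.denseRange_iff.mp hys0 y (ε/2) (by linarith)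
    obtain ⟨j, hj⟩ := del_small
      (show 0 < (ε/2) / (200*(‖ys0 k‖+1)) by positivity)
    have hjε : del j * (200*(‖ys0 k‖+1)) < ε/2 := (lt_div_iff₀ (by positivity)).mp hj
    have hyn : P.ys (Nat.pair k j) = ys0 k := by
      show ys0 (Nat.unpair (Nat.pair k j)).1 = ys0 k
      rw [Nat.unpair_pair]
    obtain ⟨w, hw1, hw2⟩ := (chain_rel P (Nat.pair k j)).2.2.2
    rw [hyn] at hw1 hw2
    have hwD : (w : X) ∈ DD P := chE_le_DD P (Nat.pair k j + 1) w.2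
    refine ⟨U (w:X), ⟨(w:X), rfl⟩, ?_⟩
    have hUw : U (w:X) = ell P ⟨(w:X), hwD⟩ := hUeq ⟨(w:X), hwD⟩
    have hclose : ‖ell P ⟨(w:X), hwD⟩ - chf P (Nat.pair k j + 1) w‖
        ≤ 60 * del (Nat.pair k j + 1) * ‖(w:X)‖ :=
      ell_close P ⟨(w:X), hwD⟩ (Nat.pair k j + 1) w.2
    have hw1' : ‖chf P (Nat.pair k j + 1) w - ys0 k‖ ≤ del (Nat.pair k j) * ‖ys0 k‖ := hw1
    have hw2' : ‖(w:X)‖ ≤ 2 * ‖ys0 k‖ := hw2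
    have hUyk : ‖U (w:X) - ys0 k‖ < ε/2 := by
      have heq : U (w:X) - ys0 k
          = (ell P ⟨(w:X), hwD⟩ - chf P (Nat.pair k j + 1) w)
            + (chf P (Nat.pair k j + 1) w - ys0 k) := by
        rw [hUw]; abel
      have htri : ‖U (w:X) - ys0 k‖
          ≤ ‖ell P ⟨(w:X), hwD⟩ - chf P (Nat.pair k j + 1) w‖
            + ‖chf P (Nat.pair k j + 1) w - ys0 k‖ := by
        rw [heq]; exact norm_add_le _ _
      have hd1 : del (Nat.pair k j + 1) ≤ del j :=
        del_anti ((Nat.right_le_pair k j).trans (Nat.le_succ _))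
      have hd2 : del (Nat.pair k j) ≤ del j := del_anti (Nat.right_le_pair k j)
      have hdp1 := del_pos (Nat.pair k j + 1)
      have hdp2 := del_pos (Nat.pair k j)
      have hdpj := del_pos j
      have hyp : (0:ℝ) ≤ ‖ys0 k‖ := norm_nonneg _
      have hwp : (0:ℝ) ≤ ‖(w:X)‖ := norm_nonneg _
      nlinarith [mul_le_mul_of_nonneg_right hd1 hwp,
        mul_le_mul_of_nonneg_right hd2 hyp,
        mul_le_mul_of_nonneg_right hd1 hyp]
    calc dist y (U (w:X)) ≤ dist y (ys0 k) + dist (ys0 k) (U (w:X)) := dist_triangle _ _ _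
      _ < ε/2 + ε/2 := by
          apply add_lt_add hk
          rw [dist_comm, dist_eq_norm]
          exact hUyk
      _ = ε := by ring
  have hsurj : Function.Surjective ⇑U := by
    intro y
    have hy : y ∈ Set.range ⇑U := by
      rw [← hclosedrange.closure_eq]
      exact hdenserange y
    exact hy
  exact ⟨U.toLinearMap, hsurj, hUnorm⟩
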